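/- Let p be a nonprincipal ultrafilter on ℕ which is injectively ω*-discrete: for every injective function f from ℕ to the subspace of nonprincipal ultrafilters on ℕ there is A ∈ p such that f '' A is a discrete subspace. Then for every ultrafilter q on ℕ, p ≤_RF q holds if and only if there exists an injective sequence x : ℕ → Ultrafilter ℕ such that q is the p-limit of (x_n). -/

import Mathlib

open Filter Topology

/-- The set of nonprincipal ultrafilters on `ℕ` (the Stone–Čech remainder `ω*`). -/
def omegaStar : Set (Ultrafilter ℕ) := {u : Ultrafilter ℕ | ∀ n : ℕ, u ≠ pure n}

lemma mem_bind_iff {p : Ultrafilter ℕ} {φ : ℕ → Ultrafilter ℕ} {s : Set ℕ} :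
    s ∈ p.bind φ ↔ {n | s ∈ φ n} ∈ p := Iff.rfl

lemma tendsto_iff_bind (p : Ultrafilter ℕ) (x : ℕ → Ultrafilter ℕ) (q : Ultrafilter ℕ) :
    Filter.Tendsto x ↑p (𝓝 q) ↔ p.bind x = q := by
  rw [Filter.Tendsto, ← Ultrafilter.coe_map, ultrafilter_converges_iff]
  rw [show joinM (Ultrafilter.map x p) = p.bind x from rfl, eq_comm]

lemma finite_not_mem {u : Ultrafilter ℕ} (hu : ∀ n : ℕ, u ≠ pure n) {s : Set ℕ}
    (hs : s.Finite) : s ∉ u := by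
  intro h
  obtain ⟨a, -, hf⟩ := Ultrafilter.eq_pure_of_finite_mem hs h
  exact hu a hf

lemma exists_nonprincipal_mem {K : Set ℕ} (hK : K.Infinite) :
    ∃ v : Ultrafilter ℕ, K ∈ v ∧ ∀ n : ℕ, v ≠ pure n := by
  have hne : (cofinite ⊓ 𝓟 K : Filter ℕ).NeBot := by
    rw [inf_principal_neBot_iff]
    intro U hU
    have h2 := (hK.diff hU).nonempty
    simpa [Set.diff_eq, Set.inter_comm] using h2
  obtain ⟨v, hv⟩ := Ultrafilter.exists_le (cofinite ⊓ 𝓟 K)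
  refine ⟨v, ?_, ?_⟩
  · exact le_principal_iff.mp (hv.trans inf_le_right)
  · intro n hn
    have : ({n}ᶜ : Set ℕ) ∈ v := (hv.trans inf_le_left) (by simp)
    rw [hn] at this
    simpa using this

lemma split_infinite {B : Set ℕ} (hB : B.Infinite) :
    ∃ C ⊆ B, C.Infinite ∧ (B \ C).Infinite := by
  let e := hB.natEmbedding
  have hinj : Function.Injective (fun i => (e (2 * i) : ℕ)) := by
    intro i j h
    have := e.injective (Subtype.coe_injective h)
    omega
  refine ⟨Set.range (fun i => (e (2 * i) : ℕ)), ?_, Set.infinite_range_of_injective hinj, ?_⟩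
  · rintro _ ⟨i, rfl⟩; exact (e (2 * i)).2
  · have hinj2 : Function.Injective (fun i => (e (2 * i + 1) : ℕ)) := by
      intro i j h
      have := e.injective (Subtype.coe_injective h)
      omega
    refine (Set.infinite_range_of_injective hinj2).mono ?_
    rintro _ ⟨i, rfl⟩
    refine ⟨(e (2 * i + 1)).2, ?_⟩
    rintro ⟨j, hj⟩
    have := e.injective (Subtype.coe_injective hj)
    omega

lemma exists_infinite_avoid (u : ℕ → Ultrafilter ℕ) (hu : ∀ j, ∀ n : ℕ, u j ≠ pure n) :
    ∃ K : Set ℕ, K.Infinite ∧ ∀ j, K ∉ u j := by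
  have step : ∀ B : Set ℕ, B.Infinite → ∀ v : Ultrafilter ℕ,
      ∃ C, C ⊆ B ∧ C.Infinite ∧ C ∉ v := by
    intro B hB v
    obtain ⟨C, hCB, hCinf, hBC⟩ := split_infinite hB
    by_cases h : C ∈ v
    · refine ⟨B \ C, Set.diff_subset, hBC, fun h2 => ?_⟩
      have h3 : (B \ C) ∩ C ∈ v := inter_mem h2 h
      have h4 : (B \ C) ∩ C = ∅ := by ext a; simp only [Set.mem_inter_iff, Set.mem_diff,
        Set.mem_empty_iff_false, iff_false]; tauto
      rw [h4] at h3
      exact Ultrafilter.empty_notMem h3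
    · exact ⟨C, hCB, hCinf, h⟩
  choose! F hF1 hF2 hF3 using step
  let B : ℕ → Set ℕ := fun k => Nat.rec Set.univ (fun k Bk => F Bk (u k)) k
  have hBsucc : ∀ k, B (k + 1) = F (B k) (u k) := fun k => rfl
  have hBinf : ∀ k, (B k).Infinite := by
    intro k
    induction k with
    | zero => exact Set.infinite_univ
    | succ k ih => rw [hBsucc]; exact hF2 (B k) ih (u k)
  have hBsub : ∀ k, B (k + 1) ⊆ B k := fun k => hF1 (B k) (hBinf k) (u k)
  have hBnot : ∀ k, B (k + 1) ∉ u k := fun k => hF3 (B k) (hBinf k) (u k)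
  have hBchain : ∀ j k, j ≤ k → B k ⊆ B j := by
    intro j k hjk
    induction k with
    | zero => simp_all
    | succ k ih =>
      rcases Nat.lt_or_ge j (k + 1) with h | h
      · exact (hBsub k).trans (ih (by omega))
      · have : j = k + 1 := by omega
        subst this; exact subset_rfl
  have hgt : ∀ k m : ℕ, ∃ b ∈ B k, m < b := fun k m => (hBinf k).exists_gt m
  choose pick hpick1 hpick2 using hgt
  let a : ℕ → ℕ := fun k => Nat.rec (pick 0 0) (fun k ak => pick (k + 1) ak) k
  have ha1 : ∀ k, a k ∈ B k := by
    intro k; cases k with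
    | zero => exact hpick1 0 0
    | succ k => exact hpick1 (k + 1) (a k)
  have hmono : StrictMono a := strictMono_nat_of_lt_succ (fun k => hpick2 (k + 1) (a k))
  refine ⟨Set.range a, Set.infinite_range_of_injective hmono.injective, ?_⟩
  intro j hj
  have hfin : (Set.range a \ B (j + 1)).Finite := by
    refine ((Set.finite_Iic j).image a).subset ?_
    rintro _ ⟨⟨k, rfl⟩, hk⟩
    refine ⟨k, ?_, rfl⟩
    simp only [Set.mem_Iic]
    by_contra h
    exact hk (hBchain (j + 1) k (by omega) (ha1 k))
  have h5 : (Set.range a \ B (j + 1))ᶜ ∈ u j :=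
    Ultrafilter.compl_mem_iff_notMem.mpr (finite_not_mem (hu j) hfin)
  have h6 : Set.range a ∩ (Set.range a \ B (j + 1))ᶜ ∈ u j := inter_mem hj h5
  have h7 : Set.range a ∩ (Set.range a \ B (j + 1))ᶜ ⊆ B (j + 1) := by
    intro b hb
    simp only [Set.mem_inter_iff, Set.mem_compl_iff, Set.mem_diff, not_and, not_not] at hb
    exact hb.2 hb.1
  exact hBnot j (mem_of_superset h6 h7)

lemma discrete_of_sep {s : Set (Ultrafilter ℕ)}
    (h : ∀ u ∈ s, ∃ D : Set ℕ, D ∈ u ∧ ∀ w ∈ s, D ∈ w → w = u) :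
    DiscreteTopology ↥s := by
  rw [discreteTopology_iff_isOpen_singleton]
  rintro ⟨u, hu⟩
  obtain ⟨D, hD, hsep⟩ := h u hu
  have heq : ({⟨u, hu⟩} : Set ↥s) = Subtype.val ⁻¹' {w : Ultrafilter ℕ | D ∈ w} := by
    ext ⟨w, hw⟩
    simp only [Set.mem_singleton_iff, Set.mem_preimage, Set.mem_setOf_eq, Subtype.mk.injEq]
    exact ⟨fun h' => h' ▸ hD, fun h' => hsep w hw h'⟩
  rw [heq]
  exact (ultrafilter_isOpen_basic D).preimage continuous_subtype_val

lemma sep_of_discrete {f : ℕ → ↥omegaStar} {A : Set ℕ}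
    (h : DiscreteTopology ↥(f '' A)) :
    ∀ n ∈ A, ∃ D : Set ℕ, D ∈ (f n).1 ∧ ∀ m ∈ A, D ∈ (f m).1 → f m = f n := by
  intro n hn
  have hopen : IsOpen ({⟨f n, ⟨n, hn, rfl⟩⟩} : Set ↥(f '' A)) := isOpen_discrete _
  rw [isOpen_induced_iff] at hopen
  obtain ⟨V, hV, hVeq⟩ := hopen
  rw [isOpen_induced_iff] at hV
  obtain ⟨W, hW, hWeq⟩ := hV
  have hfnV : (f n : ↥omegaStar) ∈ V := by
    have : (⟨f n, ⟨n, hn, rfl⟩⟩ : ↥(f '' A)) ∈ Subtype.val ⁻¹' V := by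
      rw [hVeq]; rfl
    exact this
  have hfnW : ((f n : ↥omegaStar) : Ultrafilter ℕ) ∈ W := by
    rw [← hWeq] at hfnV; exact hfnV
  obtain ⟨t, ⟨D, rfl⟩, hDmem, hDsub⟩ :=
    ultrafilterBasis_is_basis.exists_subset_of_mem_open hfnW hW
  refine ⟨D, hDmem, ?_⟩
  intro m hm hDm
  have h1 : ((f m : ↥omegaStar) : Ultrafilter ℕ) ∈ W := hDsub hDm
  have h2 : (f m : ↥omegaStar) ∈ V := by rw [← hWeq]; exact h1
  have h3 : (⟨f m, ⟨m, hm, rfl⟩⟩ : ↥(f '' A)) ∈ Subtype.val ⁻¹' V := h2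
  rw [hVeq] at h3
  exact congrArg Subtype.val h3

lemma bind_congr_of_mem {p : Ultrafilter ℕ} {φ ψ : ℕ → Ultrafilter ℕ}
    (h : {n | φ n = ψ n} ∈ p) : p.bind φ = p.bind ψ := by
  ext s
  rw [mem_bind_iff, mem_bind_iff]
  constructor <;> intro h2 <;>
    · refine mem_of_superset (inter_mem h h2) ?_
      rintro n ⟨hn1, hn2⟩
      simp only [Set.mem_setOf_eq] at *
      first
        | rw [← hn1]; exact hn2
        | rw [hn1]; exact hn2

/-- If `p` is a nonprincipal injectively `ω*`-discrete ultrafilter on `ℕ`,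
then for any ultrafilter `q`, `p ≤_RF q` iff `q` is the `p`-limit of some injective
sequence in `βℕ`. -/
theorem rudinFrolik_iff_injective_limit (p : Ultrafilter ℕ)
    (hp : ∀ n : ℕ, p ≠ pure n)
    (hdisc : ∀ f : ℕ → ↥omegaStar, Function.Injective f →
      ∃ A ∈ p, DiscreteTopology ↥(f '' A)) :
    ∀ q : Ultrafilter ℕ,
      (∃ φ : ℕ → Ultrafilter ℕ, Function.Injective φ ∧
        DiscreteTopology ↥(Set.range φ) ∧ p.bind φ = q) ↔
      (∃ x : ℕ → Ultrafilter ℕ, Function.Injective x ∧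
        Filter.Tendsto x ↑p (𝓝 q)) := by
  intro q
  constructor
  · rintro ⟨φ, hinj, -, hbind⟩
    exact ⟨φ, hinj, (tendsto_iff_bind p φ q).mpr hbind⟩
  · rintro ⟨x, hxinj, hx⟩
    classical
    have hbind : p.bind x = q := (tendsto_iff_bind p x q).mp hx
    set S : Set ℕ := {n | ∀ m : ℕ, x n ≠ pure m} with hSdef
    by_cases hS : S ∈ p
    · -- Case A : p-many x n are nonprincipal
      obtain ⟨w0, -, hw0⟩ := exists_nonprincipal_mem (Set.infinite_univ (α := ℕ))
      set u : ℕ → Ultrafilter ℕ := fun j => if j ∈ S then x j else w0 with hudef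
      have hu : ∀ j, ∀ n : ℕ, u j ≠ pure n := by
        intro j n
        by_cases h : j ∈ S
        · simpa [hudef, h] using h n
        · simpa [hudef, h] using hw0 n
      obtain ⟨K, hKinf, hKav⟩ := exists_infinite_avoid u hu
      have hKx : ∀ n ∈ S, K ∉ x n := by
        intro n hn
        simpa [hudef, hn] using hKav n
      let eK := hKinf.natEmbedding
      have heKK : ∀ i, (eK i : ℕ) ∈ K := fun i => (eK i).2
      have heKinj : Function.Injective (fun i => (eK i : ℕ)) :=
        fun i j h => eK.injective (Subtype.coe_injective h)
      -- pieces of K and nonprincipal ultrafilters on them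
      have hKSinf : ∀ m : ℕ, (Set.range fun i => (eK (Nat.pair m i) : ℕ)).Infinite := by
        intro m
        exact Set.infinite_range_of_injective (fun i j h => by
          have := heKinj h
          have := Nat.pair_eq_pair.mp this
          exact this.2)
      choose v hv1 hv2 using fun m => exists_nonprincipal_mem (hKSinf m)
      have hvK : ∀ m, K ∈ v m := fun m =>
        mem_of_superset (hv1 m) (by rintro _ ⟨i, rfl⟩; exact heKK _)
      have hvinj : Function.Injective v := by
        intro m m' h
        by_contra hne
        have h1 : (Set.range fun i => (eK (Nat.pair m i) : ℕ)) ∈ v m' := h ▸ hv1 m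
        have h2 := inter_mem h1 (hv1 m')
        obtain ⟨b, hb1, hb2⟩ := ((v m').nonempty_of_mem h2)
        obtain ⟨i, hi⟩ := hb1
        obtain ⟨i', hi'⟩ := hb2
        have := heKinj (hi.trans hi'.symm)
        have := Nat.pair_eq_pair.mp this
        exact hne this.1
      -- the injective map into omegaStar
      set f : ℕ → ↥omegaStar := fun n =>
        if h : n ∈ S then ⟨x n, h⟩ else ⟨v n, hv2 n⟩ with hfdef
      have hf1 : ∀ n ∈ S, (f n : Ultrafilter ℕ) = x n := by
        intro n hn; rw [hfdef]; simp [hn]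
      have hfinj : Function.Injective f := by
        intro n m h
        have hval : (f n : Ultrafilter ℕ) = (f m : Ultrafilter ℕ) := by rw [h]
        by_cases hn : n ∈ S <;> by_cases hm : m ∈ S
        · rw [hf1 n hn, hf1 m hm] at hval; exact hxinj hval
        · rw [hf1 n hn] at hval
          rw [hfdef] at hval; simp only [hm, dif_neg, not_false_iff] at hval
          exact absurd (hval ▸ hvK m) (hKx n hn)
        · rw [hf1 m hm] at hval
          rw [hfdef] at hval; simp only [hn, dif_neg, not_false_iff] at hval
          exact absurd (hval ▸ hvK n) (hKx m hm)
        · rw [hfdef] at hval; simp only [hn, hm, dif_neg, not_false_iff] at hval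
          exact hvinj hval
      obtain ⟨A, hA, hAd⟩ := hdisc f hfinj
      have hsep := sep_of_discrete hAd
      set B : Set ℕ := A ∩ S with hBdef
      have hB : B ∈ p := inter_mem hA hS
      set φ : ℕ → Ultrafilter ℕ := fun n =>
        if n ∈ B then x n else pure (eK n : ℕ) with hφdef
      have hφB : ∀ n ∈ B, φ n = x n := by intro n hn; rw [hφdef]; simp [hn]
      have hφnB : ∀ n ∉ B, φ n = pure (eK n : ℕ) := by intro n hn; rw [hφdef]; simp [hn]
      have hφinj : Function.Injective φ := by
        intro n m h
        by_cases hn : n ∈ B <;> by_cases hm : m ∈ B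
        · rw [hφB n hn, hφB m hm] at h; exact hxinj h
        · rw [hφB n hn, hφnB m hm] at h; exact absurd h (hn.2 _)
        · rw [hφnB n hn, hφB m hm] at h; exact absurd h.symm (hm.2 _)
        · rw [hφnB n hn, hφnB m hm] at h
          exact heKinj (Ultrafilter.pure_injective h)
      refine ⟨φ, hφinj, ?_, ?_⟩
      · -- discreteness of the range
        apply discrete_of_sep
        rintro _ ⟨n, rfl⟩
        by_cases hn : n ∈ B
        · obtain ⟨D, hD, hDsep⟩ := hsep n hn.1
          rw [hf1 n hn.2] at hD
          refine ⟨D ∩ Kᶜ, ?_, ?_⟩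
          · rw [hφB n hn]
            exact inter_mem hD (Ultrafilter.compl_mem_iff_notMem.mpr (hKx n hn.2))
          · rintro _ ⟨m, rfl⟩ hw
            by_cases hm : m ∈ B
            · rw [hφB m hm] at hw ⊢
              rw [hφB n hn]
              have hDm : D ∈ x m := mem_of_superset hw Set.inter_subset_left
              rw [← hf1 m hm.2] at hDm
              have := hDsep m hm.1 hDm
              have := congrArg (Subtype.val) this
              rw [hf1 m hm.2, hf1 n hn.2] at this
              exact this
            · rw [hφnB m hm] at hw
              rw [Ultrafilter.mem_pure] at hw
              exact absurd (heKK m) hw.2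
        · refine ⟨{(eK n : ℕ)}, ?_, ?_⟩
          · rw [hφnB n hn, Ultrafilter.mem_pure]; rfl
          · rintro _ ⟨m, rfl⟩ hw
            by_cases hm : m ∈ B
            · rw [hφB m hm] at hw
              exact absurd hw (finite_not_mem (hm.2) (Set.finite_singleton _))
            · rw [hφnB m hm, Ultrafilter.mem_pure, Set.mem_singleton_iff] at hw
              rw [hφnB m hm, hφnB n hn, hw]
      · -- bind equals q
        rw [← hbind]
        apply bind_congr_of_mem
        exact mem_of_superset hB (fun n hn => hφB n hn)
    · -- Case B : p-many x n are principal
      have hP : Sᶜ ∈ p := Ultrafilter.compl_mem_iff_notMem.mpr hS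
      set P : Set ℕ := Sᶜ with hPdef
      have hPx : ∀ n ∈ P, ∃ m : ℕ, x n = pure m := by
        intro n hn
        by_contra h
        exact hn (fun m hm => h ⟨m, hm⟩)
      set g : ℕ → ℕ := fun n =>
        if h : ∃ m : ℕ, x n = pure m then h.choose else 0 with hgdef
      have hg : ∀ n ∈ P, x n = pure (g n) := by
        intro n hn
        have h := hPx n hn
        rw [hgdef]; simp only [h, dif_pos]
        exact h.choose_spec
      have hgswap : ∀ n ∈ P, ∀ m ∈ P, g n = g m → n = m := by
        intro n hn m hm h
        apply hxinj
        rw [hg n hn, hg m hm, h]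
      have hPinf : P.Infinite := fun hfin => finite_not_mem hp hfin hP
      obtain ⟨C, hCP, hCinf, hPCinf⟩ := split_infinite hPinf
      set P' : Set ℕ := if C ∈ p then C else P \ C with hP'def
      have hP' : P' ∈ p := by
        rw [hP'def]
        split
        · assumption
        · next h =>
          have : P ∩ Cᶜ ∈ p := inter_mem hP (Ultrafilter.compl_mem_iff_notMem.mpr h)
          simpa [Set.diff_eq] using this
      have hP'P : P' ⊆ P := by
        rw [hP'def]; split
        · exact hCP
        · exact Set.diff_subset
      have hPP'inf : (P \ P').Infinite := by
        rw [hP'def]; split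
        · exact hPCinf
        · rw [Set.diff_diff_cancel_left hCP]; exact hCinf
      have hDinf : ((g '' P')ᶜ : Set ℕ).Infinite := by
        refine (hPP'inf.image (f := g) ?_).mono ?_
        · intro a ha b hb hab
          exact hgswap a ha.1 b hb.1 hab
        · rintro _ ⟨n, hn, rfl⟩
          intro hmem
          obtain ⟨n', hn', hgn⟩ := hmem
          exact hn.2 (hgswap n' (hP'P hn') n hn.1 hgn ▸ hn')
      let eD := hDinf.natEmbedding
      set g' : ℕ → ℕ := fun n => if n ∈ P' then g n else (eD n : ℕ) with hg'def
      have hg'inj : Function.Injective g' := by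
        intro n m h
        rw [hg'def] at h
        by_cases hn : n ∈ P' <;> by_cases hm : m ∈ P' <;> simp only [hn, hm, if_pos,
          if_neg, not_false_iff, if_true] at h
        · exact hgswap n (hP'P hn) m (hP'P hm) h
        · exact absurd ⟨n, hn, h⟩ (eD m).2
        · exact absurd ⟨m, hm, h.symm⟩ (eD n).2
        · exact eD.injective (Subtype.coe_injective h)
      refine ⟨fun n => pure (g' n), fun n m h => hg'inj (Ultrafilter.pure_injective h),
        ?_, ?_⟩
      · apply discrete_of_sep
        rintro _ ⟨n, rfl⟩
        refine ⟨{g' n}, by rw [Ultrafilter.mem_pure]; rfl, ?_⟩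
        rintro _ ⟨m, rfl⟩ hw
        rw [Ultrafilter.mem_pure, Set.mem_singleton_iff] at hw
        show (pure (g' m) : Ultrafilter ℕ) = pure (g' n)
        rw [hw]
      · rw [← hbind]
        apply bind_congr_of_mem
        refine mem_of_superset hP' (fun n hn => ?_)
        simp only [Set.mem_setOf_eq]
        rw [hg'def]
        simp only [hn, if_pos]
        exact (hg n (hP'P hn)).symm
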